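/- Let R be a commutative noetherian local ring with residue field k, M, N finitely generated R-modules with a surjection p : M ↠ N, and n ≥ 0. Then ξ(n, M) ≥ ξ(n, N). -/
import Mathlib


noncomputable section

/-- A linear map factors through a finitely generated free module
(equivalently, through a projective module, for maps between finitely
generated modules). -/
def FactorsThruFree (R : Type) [Ring R] {M N : Type} [AddCommGroup M] [Module R M]
    [AddCommGroup N] [Module R N] (f : M →ₗ[R] N) : Prop :=
  ∃ (b : ℕ) (g : (Fin b → R) →ₗ[R] N) (h : M →ₗ[R] (Fin b → R)), f = g ∘ₗ h

/-- `SyzFactors R n f` : an induced map `Ω^n f` between `n`-th syzygies of `M` and `N`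
(computed from chosen free covers) factors through a projective (= f.g. free) module. -/
def SyzFactors (R : Type) [Ring R] :
    (n : ℕ) → {M : Type} → [AddCommGroup M] → [Module R M] →
      {N : Type} → [AddCommGroup N] → [Module R N] → (M →ₗ[R] N) → Prop
  | 0, _M, _, _, _N, _, _, f => FactorsThruFree R f
  | n + 1, _M, _, _, _N, _, _, f =>
      ∃ (a b : ℕ) (p : (Fin a → R) →ₗ[R] _M) (q : (Fin b → R) →ₗ[R] _N)
        (φ : (Fin a → R) →ₗ[R] (Fin b → R)),
        Function.Surjective p ∧ Function.Surjective q ∧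
        ∃ hcomm : q ∘ₗ φ = f ∘ₗ p,
          SyzFactors R n (φ.restrict (p := LinearMap.ker p) (q := LinearMap.ker q)
            (fun x hx => by
              have h1 : q (φ x) = f (p x) := LinearMap.congr_fun hcomm x
              rw [LinearMap.mem_ker] at hx ⊢
              rw [h1, hx, map_zero]))

/-- The `n`-th approximated ξ-invariant: the dimension over the residue field `k` of the
subspace of `Hom_R(M, k)` of maps whose `n`-th syzygy factors through a projective. -/
def xi (R : Type) [CommRing R] [IsLocalRing R] (n : ℕ)
    (M : Type) [AddCommGroup M] [Module R M] : ℕ :=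
  Module.finrank (IsLocalRing.ResidueField R)
    (Submodule.span (IsLocalRing.ResidueField R)
      {f : M →ₗ[R] IsLocalRing.ResidueField R | SyzFactors R n f})


lemma factorsThruFree_comp {R : Type} [Ring R] {M N K : Type}
    [AddCommGroup M] [Module R M] [AddCommGroup N] [Module R N]
    [AddCommGroup K] [Module R K] (f : N →ₗ[R] K) (s : M →ₗ[R] N)
    (hf : FactorsThruFree R f) : FactorsThruFree R (f ∘ₗ s) := by
  obtain ⟨b, g, h, rfl⟩ := hf
  exact ⟨b, g, h ∘ₗ s, by rw [LinearMap.comp_assoc]⟩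

lemma syzFactors_comp (R : Type) [CommRing R] [IsNoetherianRing R] :
    ∀ (n : ℕ) (M N K : Type) [AddCommGroup M] [Module R M] [Module.Finite R M]
      [AddCommGroup N] [Module R N] [AddCommGroup K] [Module R K]
      (f : N →ₗ[R] K) (s : M →ₗ[R] N),
      SyzFactors R n f → SyzFactors R n (f ∘ₗ s) := by
  intro n
  induction n with
  | zero =>
    intro M N K _ _ _ _ _ _ _ f s hf
    exact factorsThruFree_comp f s hf
  | succ n ih =>
    intro M N K _ _ _ _ _ _ _ f s hf
    obtain ⟨a, b, p', q, φ, hp', hq, hcomm, hsyz⟩ := hf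
    obtain ⟨c, p'', hp''⟩ := Module.Finite.exists_fin' R M
    obtain ⟨lam, hlam⟩ := Module.projective_lifting_property p' (s ∘ₗ p'') hp'
    refine ⟨c, b, p'', q, φ ∘ₗ lam, hp'', hq, ?_, ?_⟩
    · rw [← LinearMap.comp_assoc, hcomm, LinearMap.comp_assoc, hlam,
        ← LinearMap.comp_assoc]
    · -- restriction of φ ∘ lam equals restriction of φ composed with restriction of lam
      have hmap : ∀ x ∈ LinearMap.ker p'', lam x ∈ LinearMap.ker p' := by
        intro x hx
        have : p' (lam x) = s (p'' x) := LinearMap.congr_fun hlam x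
        rw [LinearMap.mem_ker] at hx ⊢
        rw [this, hx, map_zero]
      have : ∀ h, (φ ∘ₗ lam).restrict (p := LinearMap.ker p'') (q := LinearMap.ker q) h
          = (φ.restrict (p := LinearMap.ker p') (q := LinearMap.ker q)
              (fun x hx => by
                have h1 : q (φ x) = f (p' x) := LinearMap.congr_fun hcomm x
                rw [LinearMap.mem_ker] at hx ⊢
                rw [h1, hx, map_zero])) ∘ₗ
            (lam.restrict (p := LinearMap.ker p'') (q := LinearMap.ker p') hmap) := by
        intro h
        ext x
        rfl
      rw [this]
      haveI : Module.Finite R (LinearMap.ker p'') :=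
        Module.Finite.iff_fg.mpr (IsNoetherian.noetherian _)
      exact ih _ _ _ _ _ hsyz
section
open IsLocalRing

variable (R : Type) [CommRing R] [IsLocalRing R]

abbrev kk := IsLocalRing.ResidueField R

variable {M N : Type} [AddCommGroup M] [Module R M] [AddCommGroup N] [Module R N]

/-- Precomposition with `p` as a `k`-linear map on `Hom_R(-, k)`. -/
def precompHom (p : M →ₗ[R] N) :
    (N →ₗ[R] ResidueField R) →ₗ[ResidueField R] (M →ₗ[R] ResidueField R) where
  toFun f := f ∘ₗ p
  map_add' f g := by ext x; rfl
  map_smul' c f := by ext x; rfl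

lemma precompHom_injective {p : M →ₗ[R] N} (hp : Function.Surjective p) :
    Function.Injective (precompHom R p) := by
  intro f g h
  ext y
  obtain ⟨x, rfl⟩ := hp y
  exact LinearMap.congr_fun h x

lemma homFiniteDimensional [Module.Finite R M] :
    FiniteDimensional (ResidueField R) (M →ₗ[R] ResidueField R) := by
  obtain ⟨a, σ, hσ⟩ := Module.Finite.exists_fin' R M
  let Ψ : (M →ₗ[R] ResidueField R) →ₗ[ResidueField R] (Fin a → ResidueField R) :=
    { toFun := fun f i => f (σ (Pi.single i 1))
      map_add' := fun f g => by ext i; rfl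
      map_smul' := fun c f => by ext i; rfl }
  have hΨ : Function.Injective Ψ := by
    intro f g h
    have : f ∘ₗ σ = g ∘ₗ σ := by
      apply (Pi.basisFun R (Fin a)).ext
      intro i
      have := congr_fun h i
      simpa [Ψ, Pi.basisFun_apply] using this
    ext y
    obtain ⟨x, rfl⟩ := hσ y
    exact LinearMap.congr_fun this x
  exact FiniteDimensional.of_injective Ψ hΨ

end

/-- If there is a surjection `M ↠ N` of finitely generated modules,
then `ξ(n, M) ≥ ξ(n, N)`. -/
theorem stmt_11 (R : Type) [CommRing R] [IsNoetherianRing R] [IsLocalRing R]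
    (M N : Type) [AddCommGroup M] [Module R M] [Module.Finite R M]
    [AddCommGroup N] [Module R N] [Module.Finite R N] (n : ℕ)
    (p : M →ₗ[R] N) (hp : Function.Surjective p) :
    xi R n N ≤ xi R n M := by
  classical
  haveI := homFiniteDimensional R (M := M)
  set k := IsLocalRing.ResidueField R with hk
  have hΦ := precompHom_injective R hp
  have hsub : (precompHom R p) '' {f : N →ₗ[R] k | SyzFactors R n f}
      ⊆ {g : M →ₗ[R] k | SyzFactors R n g} := by
    rintro _ ⟨f, hf, rfl⟩
    exact syzFactors_comp R n M N k f p hf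
  have h1 : Module.finrank k
      (Submodule.span k {f : N →ₗ[R] k | SyzFactors R n f}) =
      Module.finrank k ((Submodule.span k {f : N →ₗ[R] k | SyzFactors R n f}).map
        (precompHom R p)) :=
    (Submodule.equivMapOfInjective (precompHom R p) hΦ _).finrank_eq
  have h2 : (Submodule.span k {f : N →ₗ[R] k | SyzFactors R n f}).map (precompHom R p)
      ≤ Submodule.span k {g : M →ₗ[R] k | SyzFactors R n g} := by
    rw [Submodule.map_span]
    exact Submodule.span_mono hsub
  unfold xi
  rw [h1]
  exact Submodule.finrank_mono h2
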